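/- Let ε₁, ε₂ ∈ {1, −1}, let M, D, K ∈ ℂ^{n×n} satisfy M* = ε₁M, D* = ε₂D, K* = ε₁K, and let (X, Λ) ∈ ℂ^{n×p} × ℂ^{p×p} be an invariant pair of Q(λ) = λ²M + λD + K. If the spectra of ε₁ε₂ Λ* and of Λ are disjoint, then X* M X Λ + ε₁ε₂ Λ* X* M X + X* D X = 0. -/
import Mathlib


open Matrix Polynomial

private lemma eval_charpoly' {p : ℕ} (B : Matrix (Fin p) (Fin p) ℂ) (μ : ℂ) :
    (B.charpoly).eval μ = (μ • (1 : Matrix (Fin p) (Fin p) ℂ) - B).det := by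
  rw [Matrix.charpoly, ← Polynomial.coe_evalRingHom, RingHom.map_det]
  congr 1
  ext i j
  by_cases h : i = j <;>
    simp [Matrix.charmatrix_apply, h, Matrix.one_apply, Matrix.diagonal_apply]

private lemma sylvester_zero {p : ℕ} (A B S : Matrix (Fin p) (Fin p) ℂ)
    (hd : ∀ μ : ℂ, ¬ ((μ • (1 : Matrix (Fin p) (Fin p) ℂ) - A).det = 0 ∧
      (μ • (1 : Matrix (Fin p) (Fin p) ℂ) - B).det = 0))
    (hc : A * S = S * B) : S = 0 := by
  rcases Nat.eq_zero_or_pos p with hp | hp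
  · ext i j
    exact absurd i.isLt (by omega)
  · have hpow : ∀ k : ℕ, A ^ k * S = S * B ^ k := by
      intro k
      induction k with
      | zero => simp
      | succ k ih =>
        rw [pow_succ, pow_succ, mul_assoc, hc, ← mul_assoc, ih, mul_assoc]
    have key : ∀ r : ℂ[X], (Polynomial.aeval A r) * S = S * (Polynomial.aeval B r) := by
      intro r
      induction r using Polynomial.induction_on' with
      | add f g hf hg => rw [map_add, map_add, add_mul, mul_add, hf, hg]
      | monomial k a =>
        rw [Polynomial.aeval_monomial, Polynomial.aeval_monomial, mul_assoc,
          Algebra.algebraMap_eq_smul_one, smul_mul_assoc, smul_mul_assoc, one_mul, one_mul,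
          hpow, mul_smul_comm]
    set q := B.charpoly with hq
    have h0 : (Polynomial.aeval A q) * S = 0 := by
      rw [key, Matrix.aeval_self_charpoly, mul_zero]
    have hdeg : 0 < q.degree := by
      rw [hq, Matrix.charpoly_degree_eq_dim, Fintype.card_fin]
      exact_mod_cast hp
    have hu : IsUnit (Polynomial.aeval A q) := by
      by_contra hnu
      rw [← spectrum.zero_mem_iff ℂ,
        spectrum.map_polynomial_aeval_of_degree_pos A q hdeg] at hnu
      obtain ⟨μ, hμ, hev⟩ := hnu
      refine hd μ ⟨?_, ?_⟩
      · rw [spectrum.mem_iff, Algebra.algebraMap_eq_smul_one] at hμ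
        by_contra hdet
        exact hμ ((Matrix.isUnit_iff_isUnit_det _).mpr (isUnit_iff_ne_zero.mpr hdet))
      · rw [← eval_charpoly']
        exact hev
    obtain ⟨u, hu'⟩ := hu
    rw [← hu'] at h0
    calc S = ↑u⁻¹ * (↑u * S) := by rw [← mul_assoc, Units.inv_mul, one_mul]
    _ = 0 := by rw [h0, mul_zero]

/-- For an invariant pair `(X, Λ)` of a quadratic matrix polynomial with
`(*, ε₁, ε₂)`-structure, if the spectra of `ε₁ε₂ Λᴴ` and `Λ` are disjoint then
`Xᴴ M X Λ + ε₁ε₂ Λᴴ Xᴴ M X + Xᴴ D X = 0`. -/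
theorem quadratic_star_structure_S_eq_zero
    {n p : ℕ} (ε₁ ε₂ : ℂ) (hε₁ : ε₁ = 1 ∨ ε₁ = -1) (hε₂ : ε₂ = 1 ∨ ε₂ = -1)
    (M D K : Matrix (Fin n) (Fin n) ℂ)
    (hM : Mᴴ = ε₁ • M) (hD : Dᴴ = ε₂ • D) (hK : Kᴴ = ε₁ • K)
    (X : Matrix (Fin n) (Fin p) ℂ) (Λ : Matrix (Fin p) (Fin p) ℂ)
    (h : M * X * Λ ^ 2 + D * X * Λ + K * X = 0)
    (hdisj : ∀ μ : ℂ, ¬ ((μ • (1 : Matrix (Fin p) (Fin p) ℂ) - (ε₁ * ε₂) • Λᴴ).det = 0 ∧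
      (μ • (1 : Matrix (Fin p) (Fin p) ℂ) - Λ).det = 0)) :
    Xᴴ * M * X * Λ + (ε₁ * ε₂) • (Λᴴ * (Xᴴ * M * X)) + Xᴴ * D * X = 0 := by
  have hε₁sq : ε₁ * ε₁ = 1 := by rcases hε₁ with h' | h' <;> simp [h']
  have hεsq : (ε₁ * ε₂) * (ε₁ * ε₂) = 1 := by
    rcases hε₁ with h' | h' <;> rcases hε₂ with h'' | h'' <;> simp [h', h'']
  set A := Xᴴ * M * X with hA
  set B := Xᴴ * D * X with hB
  set Cm := Xᴴ * K * X with hC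
  set e := ε₁ * ε₂ with he
  set S := A * Λ + e • (Λᴴ * A) + B with hS
  -- Claim 1 : A Λ² + B Λ + C = 0
  have claim1 : A * Λ ^ 2 + B * Λ + Cm = 0 := by
    have h2 := congrArg (fun T => Xᴴ * T) h
    simp only [Matrix.mul_add, Matrix.mul_zero, ← Matrix.mul_assoc] at h2
    rw [hA, hB, hC]
    exact h2
  -- Claim 2 : Λᴴ² A + e Λᴴ B + C = 0
  have claim2 : Λᴴ ^ 2 * A + e • (Λᴴ * B) + Cm = 0 := by
    have hct := congrArg (fun T => Tᴴ * X) h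
    simp only [conjTranspose_add, conjTranspose_mul, conjTranspose_zero, hM, hD, hK,
      Matrix.add_mul, Matrix.zero_mul, Matrix.mul_smul, Matrix.smul_mul,
      ← Matrix.mul_assoc, Matrix.conjTranspose_pow] at hct
    have h3 := congrArg (fun T => ε₁ • T) hct
    simp only [smul_add, smul_smul, hε₁sq, one_smul, smul_zero] at h3
    rw [hA, hB, hC, he]
    simp only [← Matrix.mul_assoc]
    exact h3
  -- Sylvester relation : (e • Λᴴ) * S = S * Λ
  have hsyl : (e • Λᴴ) * S = S * Λ := by
    have expand : S * Λ - (e • Λᴴ) * S =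
        (A * Λ ^ 2 + B * Λ + Cm) - (Λᴴ ^ 2 * A + e • (Λᴴ * B) + Cm) := by
      rw [hS]
      simp only [add_mul, mul_add, smul_mul_assoc, mul_smul_comm, smul_add, smul_smul, hεsq,
        one_smul, pow_two, mul_assoc]
      abel
    rw [claim1, claim2, sub_zero, sub_eq_zero] at expand
    exact expand.symm
  have hS0 : S = 0 := sylvester_zero (e • Λᴴ) Λ S hdisj hsyl
  simpa [hS, hA, hB, he] using hS0
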